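/- arXiv:1809.03387 — 3 statements merged into one kernel-verified Lean document; each statement's English description precedes it below -/
import Mathlib

section
/- Let q = (q_k)_{k≥1} be a summable sequence of positive reals with q̄ = Σ_k q_k, and let Λ(t) = Σ_k q_k (e^{t_k} − 1) for t ∈ ℓ^∞(ℝ). Then for every x ∈ ℓ¹(ℝ), the Legendre–Fenchel transform Λ*(x) = sup_{t ∈ ℓ^∞(ℝ)} { Σ_k t_k x_k − Λ(t) } equals I(x), where I(x) = Σ_k x_k (log(x_k/q_k) − 1) + q̄ if all x_k ≥ 0, and I(x) = +∞ if some x_k < 0 (with the convention 0·log 0 = 0). -/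
open scoped ENNReal Classical

private lemma stmt4_key_ineq (x q s : ℝ) (hq : 0 < q) (hx : 0 ≤ x) :
    s * x - q * (Real.exp s - 1) ≤ x * (Real.log (x / q) - 1) + q := by
  rcases eq_or_lt_of_le hx with h0 | hx
  · simp only [← h0, mul_zero, zero_mul, zero_sub, zero_add]
    nlinarith [Real.exp_pos s]
  · set L := Real.log (x / q) with hL
    have hexp : Real.exp L = x / q := Real.exp_log (by positivity)
    have h1 : s - L + 1 ≤ Real.exp (s - L) := Real.add_one_le_exp _
    have hm : Real.exp (s - L) * Real.exp L = Real.exp s := by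
      rw [← Real.exp_add]; ring_nf
    have hxq : Real.exp L * q = x := by rw [hexp]; exact div_mul_cancel₀ x hq.ne'
    nlinarith [mul_le_mul_of_nonneg_left h1 hx.le, Real.exp_pos (s - L)]

/-- Legendre–Fenchel transform of `Λ(t) = ∑ₖ q k (e^{t k} − 1)`: for `x ∈ ℓ¹(ℝ)`,
`Λ*(x) = sup_{t ∈ ℓ^∞} { ⟨t,x⟩ − Λ(t) }` equals
`I(x) = ∑ₖ (x k (log (x k / q k) − 1) + q k)` when all `x k ≥ 0` (possibly `+∞`),
and `+∞` if some `x k < 0`.  Both sides are nonnegative and are stated in `ℝ≥0∞`. -/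
theorem stmt4 (q : ℕ → ℝ) (hq : ∀ k, 0 < q k) (hqs : Summable q)
    (x : lp (fun _ : ℕ => ℝ) 1) :
    (⨆ t : lp (fun _ : ℕ => ℝ) ∞,
        ENNReal.ofReal ((∑' k : ℕ, t k * x k) - ∑' k : ℕ, q k * (Real.exp (t k) - 1))) =
      (if ∀ k : ℕ, 0 ≤ x k then
          ∑' k : ℕ, ENNReal.ofReal (x k * (Real.log (x k / q k) - 1) + q k)
        else ⊤) := by
  have hx1 : Summable fun k => ‖x k‖ := by
    have := (memℓp_gen_iff (p := 1) (by norm_num)).mp (lp.memℓp x)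
    simpa using this
  by_cases hpos : ∀ k : ℕ, 0 ≤ x k
  · simp only [if_pos hpos]
    set g : ℕ → ℝ := fun k => x k * (Real.log (x k / q k) - 1) + q k with hgdef
    have hg0 : ∀ k, 0 ≤ g k := by
      intro k
      have := stmt4_key_ineq (x k) (q k) 0 (hq k) (hpos k)
      simpa using this
    apply le_antisymm
    · -- upper bound
      apply iSup_le
      intro t
      have htb : ∀ k, ‖t k‖ ≤ ‖t‖ := fun k => lp.norm_apply_le_norm ENNReal.top_ne_zero t k
      have hsum1 : Summable fun k => t k * x k := by
        apply Summable.of_norm_bounded (hx1.mul_left ‖t‖)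
        intro k
        rw [norm_mul]
        exact mul_le_mul_of_nonneg_right (htb k) (norm_nonneg _)
      have hsum2 : Summable fun k => q k * (Real.exp (t k) - 1) := by
        apply Summable.of_norm_bounded (hqs.mul_right (Real.exp ‖t‖ + 1))
        intro k
        rw [norm_mul, Real.norm_of_nonneg (hq k).le]
        refine mul_le_mul_of_nonneg_left ?_ (hq k).le
        have h1 : Real.exp (t k) ≤ Real.exp ‖t‖ :=
          Real.exp_le_exp.mpr ((le_abs_self _).trans (htb k))
        rw [Real.norm_eq_abs, abs_le]
        constructor <;> nlinarith [Real.exp_pos (t k), Real.exp_pos ‖t‖]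
      have hsumh : Summable fun k => t k * x k - q k * (Real.exp (t k) - 1) :=
        hsum1.sub hsum2
      have heq : (∑' k : ℕ, t k * x k) - ∑' k : ℕ, q k * (Real.exp (t k) - 1) =
          ∑' k : ℕ, (t k * x k - q k * (Real.exp (t k) - 1)) :=
        (Summable.tsum_sub hsum1 hsum2).symm
      have hle : ∀ k, t k * x k - q k * (Real.exp (t k) - 1) ≤ g k := fun k =>
        stmt4_key_ineq (x k) (q k) (t k) (hq k) (hpos k)
      by_cases hgs : Summable g
      · rw [heq]
        calc ENNReal.ofReal (∑' k : ℕ, (t k * x k - q k * (Real.exp (t k) - 1)))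
            ≤ ENNReal.ofReal (∑' k, g k) :=
              ENNReal.ofReal_le_ofReal (Summable.tsum_le_tsum hle hsumh hgs)
          _ = ∑' k, ENNReal.ofReal (g k) := ENNReal.ofReal_tsum_of_nonneg hg0 hgs
      · have : (∑' k, ENNReal.ofReal (g k)) = ⊤ := by
          by_contra hc
          apply hgs
          have := ENNReal.summable_toReal hc
          convert this using 2 with k
          rw [ENNReal.toReal_ofReal (hg0 k)]
        rw [this]; exact le_top
    · -- lower bound
      rw [ENNReal.tsum_eq_iSup_sum]
      apply iSup_le
      intro s
      -- for each n, build a test function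
      have key : ∀ n : ℕ,
          ENNReal.ofReal ((∑ k ∈ s, g k) - (∑ k ∈ s, q k) * Real.exp (-(n : ℝ))) ≤
            ⨆ t : lp (fun _ : ℕ => ℝ) ∞,
              ENNReal.ofReal ((∑' k : ℕ, t k * x k) -
                ∑' k : ℕ, q k * (Real.exp (t k) - 1)) := by
        intro n
        set f : ℕ → ℝ := fun k =>
          if k ∈ s then (if x k = 0 then -(n : ℝ) else Real.log (x k / q k)) else 0 with hfdef
        have hfb : ∀ k, ‖f k‖ ≤ (n : ℝ) + ∑ j ∈ s, |Real.log (x j / q j)| := by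
          intro k
          have hs : 0 ≤ ∑ j ∈ s, |Real.log (x j / q j)| :=
            Finset.sum_nonneg fun j _ => abs_nonneg _
          by_cases hk : k ∈ s
          · by_cases hx0 : x k = 0
            · simp only [hfdef, if_pos hk, if_pos hx0, Real.norm_eq_abs, abs_neg, Nat.abs_cast]
              linarith
            · simp only [hfdef, if_pos hk, if_neg hx0, Real.norm_eq_abs]
              have : |Real.log (x k / q k)| ≤ ∑ j ∈ s, |Real.log (x j / q j)| :=
                Finset.single_le_sum (f := fun j => |Real.log (x j / q j)|)
                  (fun j _ => abs_nonneg _) hk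
              have hn : (0:ℝ) ≤ n := Nat.cast_nonneg n
              linarith
          · simp only [hfdef, if_neg hk, norm_zero]
            have hn : (0:ℝ) ≤ n := Nat.cast_nonneg n
            linarith
        have hmem : Memℓp f ∞ := by
          apply memℓp_infty
          refine ⟨(n : ℝ) + ∑ j ∈ s, |Real.log (x j / q j)|, ?_⟩
          rintro _ ⟨k, rfl⟩
          exact hfb k
        set t : lp (fun _ : ℕ => ℝ) ∞ := ⟨f, hmem⟩ with htdef
        have ht : ∀ k, t k = f k := fun k => rfl
        have hA : (∑' k : ℕ, t k * x k) = ∑ k ∈ s, f k * x k :=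
          tsum_eq_sum (s := s) fun k hk => by simp [ht, hfdef, if_neg hk]
        have hB : (∑' k : ℕ, q k * (Real.exp (t k) - 1)) =
            ∑ k ∈ s, q k * (Real.exp (f k) - 1) :=
          tsum_eq_sum (s := s) fun k hk => by simp [ht, hfdef, if_neg hk]
        have hterm : ∀ k ∈ s,
            g k - q k * Real.exp (-(n : ℝ)) ≤ f k * x k - q k * (Real.exp (f k) - 1) := by
          intro k hk
          by_cases hx0 : x k = 0
          · have hfk : f k = -(n : ℝ) := by simp [hfdef, hk, hx0]
            have hgk : g k = q k := by simp [hgdef, hx0]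
            rw [hfk, hgk, hx0]
            exact le_of_eq (by ring)
          · have hxk : 0 < x k := lt_of_le_of_ne (hpos k) (Ne.symm hx0)
            have hfk : f k = Real.log (x k / q k) := by simp [hfdef, hk, hx0]
            have hexp : Real.exp (Real.log (x k / q k)) = x k / q k :=
              Real.exp_log (div_pos hxk (hq k))
            rw [hfk, hexp]
            simp only [hgdef]
            have hq' := (hq k).ne'
            have h2 : q k * (x k / q k - 1) = x k - q k := by field_simp
            rw [h2]
            nlinarith [mul_pos (hq k) (Real.exp_pos (-(n:ℝ)))]
        have hsumle : (∑ k ∈ s, g k) - (∑ k ∈ s, q k) * Real.exp (-(n : ℝ)) ≤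
            (∑' k : ℕ, t k * x k) - ∑' k : ℕ, q k * (Real.exp (t k) - 1) := by
          rw [hA, hB, ← Finset.sum_sub_distrib, Finset.sum_mul, ← Finset.sum_sub_distrib]
          exact Finset.sum_le_sum hterm
        exact le_trans (ENNReal.ofReal_le_ofReal hsumle)
          (le_iSup (fun u : lp (fun _ : ℕ => ℝ) ∞ =>
            ENNReal.ofReal ((∑' k : ℕ, u k * x k) -
              ∑' k : ℕ, q k * (Real.exp (u k) - 1))) t)
      -- take the limit n → ∞
      have htend : Filter.Tendsto
          (fun n : ℕ => (∑ k ∈ s, g k) - (∑ k ∈ s, q k) * Real.exp (-(n : ℝ)))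
          Filter.atTop (nhds (∑ k ∈ s, g k)) := by
        have h1 : Filter.Tendsto (fun n : ℕ => Real.exp (-(n : ℝ))) Filter.atTop (nhds 0) := by
          have := Real.tendsto_exp_atBot
          exact this.comp (Filter.tendsto_neg_atBot_iff.mpr tendsto_natCast_atTop_atTop)
        have h2 := h1.const_mul (∑ k ∈ s, q k)
        have h3 := (tendsto_const_nhds (x := ∑ k ∈ s, g k) (f := Filter.atTop (α := ℕ))).sub h2
        simpa using h3
      have hsum_eq : (∑ k ∈ s, ENNReal.ofReal (g k)) = ENNReal.ofReal (∑ k ∈ s, g k) :=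
        (ENNReal.ofReal_sum_of_nonneg fun k _ => hg0 k).symm
      rw [hsum_eq]
      refine le_of_tendsto ((ENNReal.continuous_ofReal.tendsto _).comp htend) ?_
      filter_upwards with n using key n
  · -- some coordinate is negative: sup is ⊤
    simp only [if_neg hpos]
    push_neg at hpos
    obtain ⟨k0, hk0⟩ := hpos
    rw [iSup_eq_top]
    intro b hb
    obtain ⟨n, hn⟩ := exists_nat_gt (b.toReal / (-x k0))
    have hxneg : 0 < -x k0 := neg_pos.mpr hk0
    have hbn : b.toReal < (n : ℝ) * (-x k0) := (div_lt_iff₀ hxneg).mp hn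
    set f : ℕ → ℝ := fun k => if k = k0 then -(n : ℝ) else 0 with hfdef
    have hmem : Memℓp f ∞ := by
      apply memℓp_infty
      refine ⟨(n : ℝ), ?_⟩
      rintro _ ⟨k, rfl⟩
      by_cases hk : k = k0 <;> simp [hfdef, hk]
    set t : lp (fun _ : ℕ => ℝ) ∞ := ⟨f, hmem⟩ with htdef
    have ht : ∀ k, t k = f k := fun k => rfl
    have hA : (∑' k : ℕ, t k * x k) = -(n : ℝ) * x k0 := by
      rw [show (∑' k : ℕ, t k * x k) = ∑' k : ℕ, f k * x k from by simp [ht]]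
      rw [tsum_eq_single k0 (fun k hk => by simp [hfdef, if_neg hk])]
      simp [hfdef]
    have hB : (∑' k : ℕ, q k * (Real.exp (t k) - 1)) =
        q k0 * (Real.exp (-(n : ℝ)) - 1) := by
      rw [show (∑' k : ℕ, q k * (Real.exp (t k) - 1)) =
          ∑' k : ℕ, q k * (Real.exp (f k) - 1) from by simp [ht]]
      rw [tsum_eq_single k0 (fun k hk => by simp [hfdef, if_neg hk])]
      simp [hfdef]
    refine ⟨t, ?_⟩
    rw [hA, hB]
    rw [ENNReal.lt_ofReal_iff_toReal_lt hb.ne]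
    have he : Real.exp (-(n : ℝ)) ≤ 1 := Real.exp_le_one_iff.mpr (neg_nonpos.mpr (Nat.cast_nonneg n))
    nlinarith [(hq k0)]
end

section
/- Let μ > 0, a > 0, and define H(x) = −μ D(x) + (a/2) D(x)² on ℓ¹(ℝ₊), where D(x) = Σ_k k x_k. Then the lower semicontinuous regularisation of H (the greatest lower semicontinuous function ≤ H) is H_{lsc}(x) = H(x) − (1/(2a)) (μ − a D(x))₊², i.e. H_{lsc}(x) = −μ D(x) + (a/2) D(x)² if D(x) ≥ μ/a, and H_{lsc}(x) = −μ²/(2a) if D(x) < μ/a. -/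
open scoped ENNReal Classical

/-- Particle density `D(x) = ∑ₖ k x k ∈ [0,∞]`. -/
noncomputable def particleDensity (x : lp (fun _ : ℕ => ℝ) 1) : ℝ≥0∞ :=
  ∑' k : ℕ, (k : ℝ≥0∞) * ENNReal.ofReal (x k)

/-- The PMF Hamiltonian `H(x) = −μ D(x) + (a/2) D(x)²`, with value `+∞` when `D(x) = ∞`. -/
noncomputable def Hpmf (μ a : ℝ) (x : lp (fun _ : ℕ => ℝ) 1) : EReal :=
  if particleDensity x = ⊤ then ⊤
  else ((-μ * (particleDensity x).toReal + a / 2 * (particleDensity x).toReal ^ 2 : ℝ) : EReal)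

/-- The claimed lower semicontinuous regularisation of `Hpmf`:
`−μ²/(2a)` when `D(x) < μ/a`, and `Hpmf` itself when `D(x) ≥ μ/a`. -/
noncomputable def HpmfLsc (μ a : ℝ) (x : lp (fun _ : ℕ => ℝ) 1) : EReal :=
  if particleDensity x < ENNReal.ofReal (μ / a) then ((-(μ ^ 2) / (2 * a) : ℝ) : EReal)
  else Hpmf μ a x

/-- Evaluation at a coordinate is continuous on `ℓ¹`. -/
lemma continuous_eval_lp1 (k : ℕ) : Continuous fun x : lp (fun _ : ℕ => ℝ) 1 => x k := by
  have : LipschitzWith 1 fun x : lp (fun _ : ℕ => ℝ) 1 => x k := by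
    apply LipschitzWith.of_dist_le_mul
    intro x y
    rw [NNReal.coe_one, one_mul, dist_eq_norm, dist_eq_norm]
    have : x k - y k = (x - y) k := by
      rw [lp.coeFn_sub]; rfl
    rw [this]
    exact lp.norm_apply_le_norm one_ne_zero (x - y) k
  exact this.continuous

/-- The particle density is lower semicontinuous on `ℓ¹`. -/
lemma lsc_particleDensity : LowerSemicontinuous particleDensity := by
  apply lowerSemicontinuous_tsum
  intro k
  apply Continuous.lowerSemicontinuous
  exact (ENNReal.continuous_const_mul (by simp)).comp
    (ENNReal.continuous_ofReal.comp (continuous_eval_lp1 k))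

/-- Effect of adding a single coordinate bump on the particle density. -/
lemma particleDensity_add_single (x : lp (fun _ : ℕ => ℝ) 1) (hx : ∀ k, 0 ≤ x k)
    (n : ℕ) (c : ℝ) (hc : 0 ≤ c) :
    particleDensity (x + lp.single (E := fun _ : ℕ => ℝ) 1 n c)
      = particleDensity x + (n : ℝ≥0∞) * ENNReal.ofReal c := by
  set s : lp (fun _ : ℕ => ℝ) 1 := lp.single (E := fun _ : ℕ => ℝ) 1 n c with hs
  have hsingle : ∀ k : ℕ, s k = if k = n then c else 0 := by
    intro k
    by_cases h : k = n
    · subst h; simp [hs, lp.single_apply_self]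
    · simp [hs, lp.single_apply_ne _ _ _ h, h]
  have hterm : ∀ k : ℕ, (k : ℝ≥0∞) * ENNReal.ofReal ((x + s) k)
      = (k : ℝ≥0∞) * ENNReal.ofReal (x k)
        + (k : ℝ≥0∞) * ENNReal.ofReal (if k = n then c else 0) := by
    intro k
    have h1 : (x + s) k = x k + (if k = n then c else 0) := by
      simp only [lp.coeFn_add, Pi.add_apply, hsingle k]
    rw [h1, ENNReal.ofReal_add (hx k) (by split_ifs <;> simp [hc]), mul_add]
  unfold particleDensity
  rw [tsum_congr hterm, ENNReal.tsum_add]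
  congr 1
  rw [tsum_eq_single n]
  · simp
  · intro k hk
    simp [hk]

/-- Global lower bound on `Hpmf`. -/
lemma Hpmf_ge (μ a : ℝ) (ha : 0 < a) (x : lp (fun _ : ℕ => ℝ) 1) :
    ((-(μ ^ 2) / (2 * a) : ℝ) : EReal) ≤ Hpmf μ a x := by
  unfold Hpmf
  split_ifs with h
  · exact le_top
  · rw [EReal.coe_le_coe_iff]
    rw [div_le_iff₀ (by linarith : (0:ℝ) < 2 * a)]
    nlinarith [sq_nonneg (a * (particleDensity x).toReal - μ)]

/-- `HpmfLsc` is a monotone continuous function of the particle density. -/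
lemma HpmfLsc_eq (μ a : ℝ) (hμ : 0 < μ) (ha : 0 < a) (x : lp (fun _ : ℕ => ℝ) 1) :
    HpmfLsc μ a x =
      (((ENNReal.ofReal (a / 2) * (particleDensity x - ENNReal.ofReal (μ / a)) ^ 2 : ℝ≥0∞) : EReal)
        + ((-(μ ^ 2) / (2 * a) : ℝ) : EReal)) := by
  have hma : 0 < μ / a := div_pos hμ ha
  unfold HpmfLsc
  split_ifs with hlt
  · rw [tsub_eq_zero_of_le hlt.le]
    norm_num
  · push_neg at hlt
    unfold Hpmf
    split_ifs with htop
    · rw [htop]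
      rw [ENNReal.top_sub (by simp)]
      rw [ENNReal.top_pow (by norm_num), ENNReal.mul_top
        (ENNReal.ofReal_pos.2 (by linarith)).ne']
      rw [EReal.coe_ennreal_top, EReal.top_add_coe]
    · set t : ℝ := (particleDensity x).toReal with ht
      have hdt : particleDensity x = ENNReal.ofReal t := (ENNReal.ofReal_toReal htop).symm
      have htnn : 0 ≤ t := ENNReal.toReal_nonneg
      have hle : μ / a ≤ t := by
        rw [hdt, ENNReal.ofReal_le_ofReal_iff htnn] at hlt
        exact hlt
      rw [hdt, ← ENNReal.ofReal_sub t hma.le,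
        ← ENNReal.ofReal_pow (by linarith), ← ENNReal.ofReal_mul (by linarith)]
      rw [EReal.coe_ennreal_ofReal, max_eq_left (by nlinarith [sq_nonneg (t - μ / a)]),
        ← EReal.coe_add, EReal.coe_eq_coe_iff]
      field_simp
      ring

lemma lsc_HpmfLsc (μ a : ℝ) (hμ : 0 < μ) (ha : 0 < a) :
    LowerSemicontinuous (HpmfLsc μ a) := by
  have hF :
      HpmfLsc μ a =
        (fun d : ℝ≥0∞ =>
          (((ENNReal.ofReal (a / 2) * (d - ENNReal.ofReal (μ / a)) ^ 2 : ℝ≥0∞) : EReal)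
            + ((-(μ ^ 2) / (2 * a) : ℝ) : EReal))) ∘ particleDensity :=
    funext (HpmfLsc_eq μ a hμ ha)
  rw [hF]
  apply Continuous.comp_lowerSemicontinuous _ lsc_particleDensity
  · -- monotonicity
    intro d d' hdd
    apply add_le_add_left
    rw [EReal.coe_ennreal_le_coe_ennreal_iff]
    exact mul_le_mul_right (pow_le_pow_left' (tsub_le_tsub_right hdd _) 2) _
  · -- continuity
    have h1 : Continuous fun e : EReal => e + ((-(μ ^ 2) / (2 * a) : ℝ) : EReal) := by
      rw [continuous_iff_continuousAt]
      intro e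
      have h2 : ContinuousAt (fun x : EReal => (x, ((-(μ ^ 2) / (2 * a) : ℝ) : EReal))) e :=
        (continuous_id.prodMk continuous_const).continuousAt
      exact (EReal.continuousAt_add (Or.inr (EReal.coe_ne_bot _))
        (Or.inr (EReal.coe_ne_top _))).comp h2
    exact h1.comp (continuous_coe_ennreal_ereal.comp
      ((ENNReal.continuous_const_mul (by simp)).comp
        ((ENNReal.continuous_pow 2).comp (ENNReal.continuous_sub_right _))))

/-- For `μ > 0`, `a > 0`, the function `HpmfLsc μ a` is the lower semicontinuous
regularisation (greatest lsc minorant) of `Hpmf μ a` on the nonnegative cone of `ℓ¹(ℝ)`. -/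
theorem stmt9 (μ a : ℝ) (hμ : 0 < μ) (ha : 0 < a) :
    LowerSemicontinuousOn (HpmfLsc μ a) {x : lp (fun _ : ℕ => ℝ) 1 | ∀ k, 0 ≤ x k} ∧
    (∀ x : lp (fun _ : ℕ => ℝ) 1, (∀ k, 0 ≤ x k) → HpmfLsc μ a x ≤ Hpmf μ a x) ∧
    (∀ G : lp (fun _ : ℕ => ℝ) 1 → EReal,
      LowerSemicontinuousOn G {x : lp (fun _ : ℕ => ℝ) 1 | ∀ k, 0 ≤ x k} →
      (∀ x : lp (fun _ : ℕ => ℝ) 1, (∀ k, 0 ≤ x k) → G x ≤ Hpmf μ a x) →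
      ∀ x : lp (fun _ : ℕ => ℝ) 1, (∀ k, 0 ≤ x k) → G x ≤ HpmfLsc μ a x) := by
  have hma : 0 < μ / a := div_pos hμ ha
  refine ⟨(lsc_HpmfLsc μ a hμ ha).lowerSemicontinuousOn _, ?_, ?_⟩
  · -- minorant property
    intro x hx
    unfold HpmfLsc
    split_ifs with hlt
    · exact Hpmf_ge μ a ha x
    · exact le_rfl
  · -- maximality
    intro G hG hGle x hx
    by_cases hlt : particleDensity x < ENNReal.ofReal (μ / a)
    swap
    · rw [HpmfLsc, if_neg hlt]
      exact hGle x hx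
    rw [HpmfLsc, if_pos hlt]
    by_contra hcon
    push_neg at hcon
    -- setup of the approximating sequence
    have htop : particleDensity x ≠ ⊤ := (lt_of_lt_of_le hlt le_top).ne
    set t : ℝ := (particleDensity x).toReal with ht
    have hdt : particleDensity x = ENNReal.ofReal t := (ENNReal.ofReal_toReal htop).symm
    have htnn : 0 ≤ t := ENNReal.toReal_nonneg
    have htlt : t < μ / a := by
      rw [hdt, ENNReal.ofReal_lt_ofReal_iff hma] at hlt
      exact hlt
    set c : ℝ := μ / a - t with hc
    have hcpos : 0 < c := by simp [hc]; linarith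
    set y : ℕ → lp (fun _ : ℕ => ℝ) 1 :=
      fun n => x + lp.single 1 (n + 1) (c / (n + 1)) with hy
    have hcdiv : ∀ n : ℕ, 0 ≤ c / ((n : ℝ) + 1) := by
      intro n; positivity
    have hsingle : ∀ n k : ℕ, (lp.single 1 (n + 1) (c / ((n : ℝ) + 1)) : ∀ _ : ℕ, ℝ) k
        = if k = n + 1 then c / ((n : ℝ) + 1) else 0 := by
      intro n k
      by_cases h : k = n + 1
      · subst h; simp [lp.single_apply_self]
      · simp [lp.single_apply_ne _ _ _ h, h]
    have hymem : ∀ n, y n ∈ {x : lp (fun _ : ℕ => ℝ) 1 | ∀ k, 0 ≤ x k} := by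
      intro n k
      have : (y n) k = x k + (if k = n + 1 then c / ((n : ℝ) + 1) else 0) := by
        rw [hy]
        simp only [lp.coeFn_add, Pi.add_apply, hsingle n k]
      rw [this]
      have := hx k
      split_ifs with h
      · have := hcdiv n; linarith
      · linarith
    have hyD : ∀ n, particleDensity (y n) = ENNReal.ofReal (μ / a) := by
      intro n
      rw [hy]
      have := particleDensity_add_single x hx (n + 1) (c / ((n : ℝ) + 1)) (hcdiv n)
      push_cast at this ⊢
      rw [this]
      have hn1 : ((n : ℝ) + 1) ≠ 0 := by positivity
      have hcast : ((n : ℕ) + 1 : ℝ≥0∞) = ENNReal.ofReal ((n : ℝ) + 1) := by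
        rw [ENNReal.ofReal_add (by positivity) zero_le_one]
        simp [ENNReal.ofReal_natCast]
      have : ((n : ℝ≥0∞) + 1) * ENNReal.ofReal (c / ((n : ℝ) + 1)) = ENNReal.ofReal c := by
        rw [hcast, ← ENNReal.ofReal_mul (by positivity)]
        congr 1
        field_simp
      rw [this, hdt, ← ENNReal.ofReal_add htnn hcpos.le]
      congr 1
      simp [hc]
    have hyH : ∀ n, Hpmf μ a (y n) = ((-(μ ^ 2) / (2 * a) : ℝ) : EReal) := by
      intro n
      rw [Hpmf, if_neg (by rw [hyD n]; simp), hyD n,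
        ENNReal.toReal_ofReal hma.le, EReal.coe_eq_coe_iff]
      field_simp
      ring
    -- convergence of the sequence
    have htends : Filter.Tendsto y Filter.atTop (nhds x) := by
      rw [tendsto_iff_norm_sub_tendsto_zero]
      have hnorm : ∀ n : ℕ, ‖y n - x‖ = c / ((n : ℝ) + 1) := by
        intro n
        rw [hy]
        have : x + lp.single 1 (n + 1) (c / ((n : ℝ) + 1)) - x
            = lp.single 1 (n + 1) (c / ((n : ℝ) + 1)) := by
          abel
        push_cast
        rw [this]
        have := lp.norm_single (E := fun _ : ℕ => ℝ) (p := (1 : ℝ≥0∞)) (by norm_num)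
          (n + 1) (c / ((n : ℝ) + 1))
        rw [this, Real.norm_eq_abs, abs_of_nonneg (hcdiv n)]
      have : Filter.Tendsto (fun n : ℕ => c / ((n : ℝ) + 1)) Filter.atTop (nhds 0) := by
        have h1 := tendsto_const_div_atTop_nhds_zero_nat c
        have h2 := h1.comp (Filter.tendsto_add_atTop_nat 1)
        have heq : (fun n : ℕ => c / ((n : ℝ) + 1))
            = (fun n : ℕ => c / (n : ℝ)) ∘ (fun n : ℕ => n + 1) := by
          funext n
          simp only [Function.comp_apply]
          push_cast
          ring
        rw [heq]
        exact h2
      simpa only [hnorm] using this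
    have htendsW : Filter.Tendsto y Filter.atTop
        (nhdsWithin x {x : lp (fun _ : ℕ => ℝ) 1 | ∀ k, 0 ≤ x k}) :=
      tendsto_nhdsWithin_of_tendsto_nhds_of_eventually_within y htends
        (Filter.Eventually.of_forall hymem)
    have hev := hG x hx _ hcon
    obtain ⟨n, hn⟩ := (htendsW.eventually hev).exists
    have hle := hGle (y n) (hymem n)
    rw [hyH n] at hle
    exact absurd (lt_of_lt_of_le hn hle) (lt_irrefl _)
end

section
/- Let a > 0, β > 0, μ ∈ ℝ, and q_k > 0 with Σ_k k q_k e^{βεk} < ∞ for all ε < 0 and Σ_k k q_k ∈ (0,∞]. Define h(δ) = Σ_{k≥1} k q_k exp(βk (μ − aδ)₋) for δ ≥ 0, where (z)₋ = min(z, 0). Then h is non-increasing on [0,∞), lim_{δ→∞} h(δ) = 0, and if Σ_k k q_k = ∞ in the case μ ≥ 0, or in all other cases, there exists a unique δ* > 0 with h(δ*) = δ* whenever lim_{δ→0⁺} h(δ) > 0. -/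
open scoped ENNReal
open Filter

namespace Stmt16Aux

/-- The real-valued summand of the PMF self-consistency function. -/
noncomputable def F (a β μ : ℝ) (q : ℕ → ℝ) (δ : ℝ) (k : ℕ) : ℝ :=
  (k : ℝ) * q k * Real.exp (β * (k : ℝ) * min (μ - a * δ) 0)

/-- The PMF self-consistency function, valued in `[0,∞]`. -/
noncomputable def H (a β μ : ℝ) (q : ℕ → ℝ) (δ : ℝ) : ℝ≥0∞ :=
  ∑' k : ℕ, ENNReal.ofReal (F a β μ q δ k)

variable {a β μ : ℝ} {q : ℕ → ℝ}

lemma F_nonneg (hq : ∀ k, 0 < q k) (δ : ℝ) (k : ℕ) : 0 ≤ F a β μ q δ k := by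
  have := (hq k).le
  unfold F; positivity

lemma F_cont (k : ℕ) : Continuous fun δ : ℝ => F a β μ q δ k := by
  unfold F; fun_prop

lemma F_anti (ha : 0 < a) (hβ : 0 < β) (hq : ∀ k, 0 < q k) (k : ℕ) {x y : ℝ}
    (hxy : x ≤ y) : F a β μ q y k ≤ F a β μ q x k := by
  unfold F
  have hqk := (hq k).le
  have hk : (0:ℝ) ≤ (k:ℝ) := Nat.cast_nonneg k
  refine mul_le_mul_of_nonneg_left (Real.exp_le_exp.2 ?_) (by positivity)
  refine mul_le_mul_of_nonneg_left ?_ (by positivity)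
  exact min_le_min (by nlinarith) le_rfl

lemma H_anti (ha : 0 < a) (hβ : 0 < β) (hq : ∀ k, 0 < q k) : Antitone (H a β μ q) :=
  fun x y hxy => ENNReal.tsum_le_tsum fun k =>
    ENNReal.ofReal_le_ofReal (F_anti ha hβ hq k hxy)

lemma summable_of_neg
    (hsummable : ∀ ε : ℝ, ε < 0 →
      Summable (fun k : ℕ => (k : ℝ) * q k * Real.exp (β * ε * (k : ℝ))))
    {δ : ℝ} (hs : μ - a * δ < 0) : Summable (F a β μ q δ) := by
  refine (hsummable (μ - a * δ) hs).congr fun k => ?_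
  unfold F
  rw [min_eq_left hs.le]; ring_nf

lemma H_eq (hq : ∀ k, 0 < q k) {δ : ℝ} (hsum : Summable (F a β μ q δ)) :
    H a β μ q δ = ENNReal.ofReal (∑' k : ℕ, F a β μ q δ k) :=
  (ENNReal.ofReal_tsum_of_nonneg (F_nonneg hq δ) hsum).symm

lemma H_tendsto (ha : 0 < a) (hβ : 0 < β) (hq : ∀ k, 0 < q k)
    (hsummable : ∀ ε : ℝ, ε < 0 →
      Summable (fun k : ℕ => (k : ℝ) * q k * Real.exp (β * ε * (k : ℝ)))) :
    Tendsto (H a β μ q) atTop (nhds 0) := by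
  have hCsum : Summable (fun k : ℕ => (k:ℝ) * q k * Real.exp (β * (-1) * (k:ℝ))) :=
    hsummable (-1) (by norm_num)
  set C : ℝ≥0∞ := ∑' k : ℕ, ENNReal.ofReal ((k:ℝ) * q k * Real.exp (β * (-1) * (k:ℝ))) with hCdef
  have hC : C ≠ ∞ := by
    rw [hCdef, ← ENNReal.ofReal_tsum_of_nonneg (fun k => by have := (hq k).le; positivity) hCsum]
    exact ENNReal.ofReal_ne_top
  have hbound : ∀ δ : ℝ, (μ + 1)/a ≤ δ →
      H a β μ q δ ≤ ENNReal.ofReal (Real.exp (β * (μ - a*δ + 1))) * C := by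
    intro δ hδ
    have hs : μ - a * δ ≤ -1 := by
      rw [div_le_iff₀ ha] at hδ; linarith
    calc H a β μ q δ
        ≤ ∑' k : ℕ, ENNReal.ofReal (Real.exp (β * (μ - a*δ + 1)) *
            ((k:ℝ) * q k * Real.exp (β * (-1) * (k:ℝ)))) := by
          refine ENNReal.tsum_le_tsum fun k => ENNReal.ofReal_le_ofReal ?_
          have hqk := (hq k).le
          rcases Nat.eq_zero_or_pos k with rfl | hk
          · simp [F]
          have hk1 : (1:ℝ) ≤ (k:ℝ) := by exact_mod_cast hk
          unfold F
          rw [min_eq_left (by linarith)]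
          rw [show Real.exp (β*(μ - a*δ+1)) * ((k:ℝ)*q k*Real.exp (β*(-1)*(k:ℝ)))
              = (k:ℝ)*q k*(Real.exp (β*(μ - a*δ+1)) * Real.exp (β*(-1)*(k:ℝ))) by ring,
            ← Real.exp_add]
          refine mul_le_mul_of_nonneg_left (Real.exp_le_exp.2 ?_)
            (by positivity)
          nlinarith [mul_nonneg (mul_nonneg hβ.le (sub_nonneg.2 hk1))
            (by linarith : (0:ℝ) ≤ -(μ - a*δ + 1))]
      _ = ENNReal.ofReal (Real.exp (β * (μ - a*δ + 1))) * C := by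
          rw [hCdef, ← ENNReal.tsum_mul_left]
          refine tsum_congr fun k => ?_
          rw [ENNReal.ofReal_mul (Real.exp_nonneg _)]
  have hexp : Tendsto (fun δ : ℝ => Real.exp (β * (μ - a*δ + 1))) atTop (nhds 0) := by
    have h2 : Tendsto (fun δ : ℝ => a*δ) atTop atTop :=
      (tendsto_const_mul_atTop_of_pos ha).2 tendsto_id
    have h3 := tendsto_atBot_add_const_left atTop (μ+1) (tendsto_neg_atTop_atBot.comp h2)
    have h1 : Tendsto (fun δ : ℝ => μ - a*δ + 1) atTop atBot :=
      h3.congr (fun δ => by simp only [Function.comp_apply]; ring)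
    have h1' : Tendsto (fun δ : ℝ => β * (μ - a*δ + 1)) atTop atBot :=
      (tendsto_const_mul_atBot_of_pos hβ).2 h1
    exact Real.tendsto_exp_atBot.comp h1'
  have hlim : Tendsto (fun δ : ℝ => ENNReal.ofReal (Real.exp (β * (μ - a*δ + 1))) * C)
      atTop (nhds 0) := by
    have := ENNReal.Tendsto.mul_const (ENNReal.tendsto_ofReal hexp) (Or.inr hC)
    simpa using this
  refine tendsto_of_tendsto_of_tendsto_of_le_of_le' tendsto_const_nhds hlim
    (Eventually.of_forall fun δ => zero_le) ?_
  filter_upwards [eventually_ge_atTop ((μ+1)/a)] with δ hδ using hbound δ hδ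

/-- Existence and uniqueness of the positive fixed point. -/
lemma H_fixed (ha : 0 < a) (hβ : 0 < β) (hq : ∀ k, 0 < q k)
    (hsummable : ∀ ε : ℝ, ε < 0 →
      Summable (fun k : ℕ => (k : ℝ) * q k * Real.exp (β * ε * (k : ℝ)))) :
    ∃! δ : ℝ, 0 < δ ∧ H a β μ q δ = ENNReal.ofReal δ := by
  have hanti := H_anti (μ := μ) (q := q) ha hβ hq
  -- the set of subsolutions
  set S : Set ℝ := {δ : ℝ | 0 < δ ∧ ENNReal.ofReal δ ≤ H a β μ q δ} with hSdef
  -- S is nonempty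
  have hSne : S.Nonempty := by
    set c : ℝ := q 1 * Real.exp (β * min (μ - a) 0) with hcdef
    have hc : 0 < c := by have := hq 1; positivity
    have hm : 0 < min 1 c := lt_min one_pos hc
    refine ⟨min 1 c, hm, ?_⟩
    have h1 : ENNReal.ofReal (F a β μ q (min 1 c) 1) ≤ H a β μ q (min 1 c) :=
      ENNReal.le_tsum 1
    refine le_trans (ENNReal.ofReal_le_ofReal ?_) h1
    have hminle : min (μ - a) 0 ≤ min (μ - a * min 1 c) 0 := by
      refine min_le_min ?_ le_rfl
      have : a * min 1 c ≤ a := by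
        nlinarith [min_le_left (1:ℝ) c]
      linarith
    calc min 1 c ≤ c := min_le_right _ _
      _ ≤ q 1 * Real.exp (β * min (μ - a * min 1 c) 0) := by
          rw [hcdef]
          refine mul_le_mul_of_nonneg_left (Real.exp_le_exp.2 ?_) (hq 1).le
          exact mul_le_mul_of_nonneg_left hminle hβ.le
      _ = F a β μ q (min 1 c) 1 := by
          unfold F; push_cast; ring
  -- S is bounded above
  obtain ⟨M, hM⟩ : ∃ M : ℝ, ∀ δ ≥ M, H a β μ q δ < 1 := by
    have := (H_tendsto (μ := μ) ha hβ hq hsummable).eventually_lt_const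
      (show (0:ℝ≥0∞) < 1 from zero_lt_one)
    exact eventually_atTop.1 this
  have hSbdd : BddAbove S := by
    refine ⟨max M 1, fun δ hδ => ?_⟩
    by_contra hgt
    push_neg at hgt
    have h1 : (1:ℝ≥0∞) ≤ ENNReal.ofReal δ := by
      rw [← ENNReal.ofReal_one]
      exact ENNReal.ofReal_le_ofReal (le_of_lt (lt_of_le_of_lt (le_max_right M 1) hgt))
    exact absurd (h1.trans hδ.2)
      (not_le.2 (hM δ (le_of_lt (lt_of_le_of_lt (le_max_left M 1) hgt))))
  set t : ℝ := sSup S with htdef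
  have htpos : 0 < t := by
    obtain ⟨d0, hd0⟩ := id hSne
    exact lt_of_lt_of_le hd0.1 (le_csSup hSbdd hd0)
  -- everything above t is a strict supersolution
  have hub : ∀ δ, t < δ → H a β μ q δ < ENNReal.ofReal δ := by
    intro δ hδ
    have hδ0 : 0 < δ := htpos.trans hδ
    by_contra hle
    push_neg at hle
    exact absurd (le_csSup hSbdd ⟨hδ0, hle⟩) (not_le.2 hδ)
  -- Direction 1 : H t ≤ ofReal t
  have hD1 : H a β μ q t ≤ ENNReal.ofReal t := by
    rw [H, ENNReal.tsum_eq_iSup_sum]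
    refine iSup_le fun T => ?_
    have hseq : Tendsto (fun n : ℕ => t + 1/((n:ℝ)+1)) atTop (nhds t) := by
      have := tendsto_const_nhds (x := t) (f := atTop (α := ℕ)) |>.add
        tendsto_one_div_add_atTop_nhds_zero_nat
      simpa using this
    have hterm : ∀ k : ℕ, Tendsto (fun n : ℕ => ENNReal.ofReal (F a β μ q (t + 1/((n:ℝ)+1)) k))
        atTop (nhds (ENNReal.ofReal (F a β μ q t k))) :=
      fun k => ((ENNReal.continuous_ofReal.comp (F_cont k)).tendsto t).comp hseq
    refine le_of_tendsto_of_tendsto' (tendsto_finset_sum T fun k _ => hterm k)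
      ((ENNReal.continuous_ofReal.tendsto t).comp hseq) fun n => ?_
    have hpos' : (0:ℝ) < 1/((n:ℝ)+1) := by positivity
    calc (∑ k ∈ T, ENNReal.ofReal (F a β μ q (t + 1/((n:ℝ)+1)) k))
        ≤ H a β μ q (t + 1/((n:ℝ)+1)) := ENNReal.sum_le_tsum T
      _ ≤ ENNReal.ofReal (t + 1/((n:ℝ)+1)) := (hub _ (by linarith)).le
  -- Direction 2 : ofReal t ≤ H t
  have hD2 : ENNReal.ofReal t ≤ H a β μ q t := by
    rcases le_or_gt t (μ / a) with hcase | hcase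
    · -- constant region : H δ = Q for 0 < δ ≤ μ/a
      have hconst : ∀ δ : ℝ, δ ≤ μ / a → H a β μ q δ = H a β μ q t := by
        intro δ hδ
        have e : ∀ x : ℝ, x ≤ μ / a → ∀ k : ℕ, F a β μ q x k = (k:ℝ) * q k := by
          intro x hx k
          unfold F
          rw [min_eq_right (by rw [le_div_iff₀ ha] at hx; linarith), mul_zero,
            Real.exp_zero, mul_one]
        unfold H
        refine tsum_congr fun k => ?_
        rw [e δ hδ k, e t hcase k]
      -- approximate t from inside S
      choose v hvS hvlt using fun n : ℕ =>
        exists_lt_of_lt_csSup hSne (show t - 1/((n:ℝ)+1) < t by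
          have : (0:ℝ) < 1/((n:ℝ)+1) := by positivity
          linarith)
      have hvle : ∀ n, v n ≤ t := fun n => le_csSup hSbdd (hvS n)
      have hvtend : Tendsto v atTop (nhds t) := by
        refine tendsto_of_tendsto_of_tendsto_of_le_of_le (g := fun n : ℕ => t - 1/((n:ℝ)+1))
          ?_ tendsto_const_nhds (fun n => by exact (hvlt n).le) (fun n => hvle n)
        have := tendsto_const_nhds (x := t) (f := atTop (α := ℕ)) |>.sub
          tendsto_one_div_add_atTop_nhds_zero_nat
        simpa using this
      refine le_of_tendsto' ((ENNReal.continuous_ofReal.tendsto t).comp hvtend) fun n => ?_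
      calc ENNReal.ofReal (v n) ≤ H a β μ q (v n) := (hvS n).2
        _ = H a β μ q t := hconst _ ((hvle n).trans hcase)
    · -- strictly decreasing region : use dominated convergence
      set δ1 : ℝ := max ((μ/a + t)/2) (t/2) with hδ1def
      have hδ1lt : δ1 < t := max_lt (by linarith) (by linarith)
      have hδ1gt : μ / a < δ1 := lt_of_lt_of_le (by linarith) (le_max_left _ _)
      have hs1 : μ - a * δ1 < 0 := by
        rw [div_lt_iff₀ ha] at hδ1gt; linarith
      have hst : μ - a * t < 0 := by
        rw [div_lt_iff₀ ha] at hcase; linarith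
      have hsum1 : Summable (F a β μ q δ1) := summable_of_neg hsummable hs1
      have hsumt : Summable (F a β μ q t) := summable_of_neg hsummable hst
      -- approximating sequence in S above δ1
      choose v hvS hvlt using fun n : ℕ =>
        exists_lt_of_lt_csSup hSne (show max δ1 (t - 1/((n:ℝ)+1)) < t from
          max_lt hδ1lt (by
            have : (0:ℝ) < 1/((n:ℝ)+1) := by positivity
            linarith))
      have hvle : ∀ n, v n ≤ t := fun n => le_csSup hSbdd (hvS n)
      have hvgt : ∀ n, δ1 < v n := fun n => lt_of_le_of_lt (le_max_left _ _) (hvlt n)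
      have hvtend : Tendsto v atTop (nhds t) := by
        refine tendsto_of_tendsto_of_tendsto_of_le_of_le (g := fun n : ℕ => t - 1/((n:ℝ)+1))
          ?_ tendsto_const_nhds
          (fun n => by exact le_of_lt (lt_of_le_of_lt (le_max_right _ _) (hvlt n))) (fun n => hvle n)
        have := tendsto_const_nhds (x := t) (f := atTop (α := ℕ)) |>.sub
          tendsto_one_div_add_atTop_nhds_zero_nat
        simpa using this
      -- dominated convergence for the real sums
      have hreal : Tendsto (fun n : ℕ => ∑' k : ℕ, F a β μ q (v n) k) atTop
          (nhds (∑' k : ℕ, F a β μ q t k)) := by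
        refine tendsto_tsum_of_dominated_convergence hsum1
          (fun k => ((F_cont k).tendsto t).comp hvtend) ?_
        refine Eventually.of_forall fun n k => ?_
        rw [Real.norm_of_nonneg (F_nonneg hq _ k)]
        exact F_anti ha hβ hq k (hvgt n).le
      have hHtend : Tendsto (fun n : ℕ => H a β μ q (v n)) atTop (nhds (H a β μ q t)) := by
        have hsumv : ∀ n, Summable (F a β μ q (v n)) := fun n =>
          summable_of_neg hsummable (by
            have := hvgt n
            rw [div_lt_iff₀ ha] at hδ1gt
            nlinarith)
        have h1 : Tendsto (fun n : ℕ => ENNReal.ofReal (∑' k : ℕ, F a β μ q (v n) k)) atTop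
            (nhds (ENNReal.ofReal (∑' k : ℕ, F a β μ q t k))) :=
          (ENNReal.continuous_ofReal.tendsto _).comp hreal
        rw [H_eq hq hsumt]
        refine h1.congr fun n => ?_
        rw [← H_eq hq (hsumv n)]
      refine le_of_tendsto_of_tendsto' ((ENNReal.continuous_ofReal.tendsto t).comp hvtend)
        hHtend fun n => (hvS n).2
  -- conclusion
  refine ⟨t, ⟨htpos, le_antisymm hD1 hD2⟩, fun y hy => ?_⟩
  have hfix : H a β μ q t = ENNReal.ofReal t := le_antisymm hD1 hD2
  rcases le_total y t with h | h
  · refine le_antisymm h ?_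
    have := hanti h
    rw [hy.2, hfix] at this
    exact (ENNReal.ofReal_le_ofReal_iff hy.1.le).1 this
  · refine le_antisymm ?_ h
    have := hanti h
    rw [hy.2, hfix] at this
    exact (ENNReal.ofReal_le_ofReal_iff htpos.le).1 this

end Stmt16Aux

/-- The PMF self-consistency function
`h(δ) = ∑ₖ k q_k exp(βk (μ − aδ)₋)` (valued in `[0,∞]`) is non-increasing on `[0,∞)`,
tends to `0` as `δ → ∞`, and, whenever its limit from the right at `0`
(equal to `⨆_{δ>0} h δ` by monotonicity) is positive, has a unique fixed point `δ* > 0`. -/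
theorem stmt16 (a β μ : ℝ) (ha : 0 < a) (hβ : 0 < β) (q : ℕ → ℝ) (hq : ∀ k, 0 < q k)
    (hsummable : ∀ ε : ℝ, ε < 0 →
      Summable (fun k : ℕ => (k : ℝ) * q k * Real.exp (β * ε * (k : ℝ))))
    (hpos : 0 < ∑' k : ℕ, ENNReal.ofReal ((k : ℝ) * q k)) :
    AntitoneOn (fun δ : ℝ =>
        ∑' k : ℕ, ENNReal.ofReal ((k : ℝ) * q k * Real.exp (β * (k : ℝ) * min (μ - a * δ) 0)))
      (Set.Ici 0) ∧
    Tendsto (fun δ : ℝ =>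
        ∑' k : ℕ, ENNReal.ofReal ((k : ℝ) * q k * Real.exp (β * (k : ℝ) * min (μ - a * δ) 0)))
      atTop (nhds 0) ∧
    ((0 < ⨆ δ ∈ Set.Ioi (0 : ℝ),
        ∑' k : ℕ, ENNReal.ofReal ((k : ℝ) * q k * Real.exp (β * (k : ℝ) * min (μ - a * δ) 0))) →
      ∃! δ : ℝ, 0 < δ ∧
        (∑' k : ℕ, ENNReal.ofReal ((k : ℝ) * q k * Real.exp (β * (k : ℝ) * min (μ - a * δ) 0)))
          = ENNReal.ofReal δ) := by
  refine ⟨(Stmt16Aux.H_anti ha hβ hq).antitoneOn _,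
    Stmt16Aux.H_tendsto ha hβ hq hsummable,
    fun _ => Stmt16Aux.H_fixed ha hβ hq hsummable⟩
end
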